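/- Among all C^{k+1} functions ψ on [0,1] satisfying ψ^{(α)}(0) = φ^{(α)}(0) and ψ^{(α)}(1) = φ^{(α)}(1) for 0 ≤ α ≤ k, the Hermite interpolant H of φ minimizes the functional F[ψ] = ∫_0^1 (ψ^{(k+1)}(x))^2 dx. -/

import Mathlib

open Set intervalIntegral
open Polynomial (derivative)

local notation "I01" => Set.Icc (0:ℝ) 1

private lemma polyIteratedDeriv (p : Polynomial ℝ) (n : ℕ) :
    iteratedDeriv n (fun t => p.eval t) = fun x => (derivative^[n] p).eval x := by
  induction n generalizing p with
  | zero => simp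
  | succ n ih =>
    rw [iteratedDeriv_succ', Function.iterate_succ_apply]
    rw [← ih p.derivative]
    have : (deriv fun t => p.eval t) = fun t => p.derivative.eval t :=
      funext fun x => Polynomial.deriv _
    rw [this]

private lemma polyIteratedDerivWithin (p : Polynomial ℝ) (n : ℕ) {x : ℝ} (hx : x ∈ I01) :
    iteratedDerivWithin n (fun t => p.eval t) I01 x = (derivative^[n] p).eval x := by
  have hs : UniqueDiffOn ℝ I01 := uniqueDiffOn_Icc one_pos
  induction n generalizing x with
  | zero => simp
  | succ n ih =>
    rw [iteratedDerivWithin_succ]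
    rw [derivWithin_congr (fun y hy => ih hy) (ih hx)]
    rw [(Polynomial.differentiableAt _).derivWithin
      (hs.uniqueDiffWithinAt hx)]
    rw [Function.iterate_succ_apply']
    exact Polynomial.deriv _

private lemma contDiff_polyEval (p : Polynomial ℝ) {n : ℕ} :
    ContDiff ℝ (n : ℕ∞) fun x : ℝ => p.eval x := by
  induction p using Polynomial.induction_on' with
  | add p q hp hq => simpa using hp.add hq
  | monomial k a =>
      simpa [Polynomial.eval_monomial] using (contDiff_const (c := a)).mul (contDiff_id.pow k)

private lemma cross_zero (k : ℕ) (H : Polynomial ℝ) (hdeg : H.natDegree ≤ 2 * k + 1)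
    (g : ℝ → ℝ) (hg : ContDiffOn ℝ (k + 1 : ℕ) g I01)
    (hg0 : ∀ α ≤ k, iteratedDerivWithin α g I01 0 = 0)
    (hg1 : ∀ α ≤ k, iteratedDerivWithin α g I01 1 = 0) :
    ∫ x in (0:ℝ)..1, (derivative^[k+1] H).eval x * iteratedDerivWithin (k+1) g I01 x = 0 := by
  have hs : UniqueDiffOn ℝ I01 := uniqueDiffOn_Icc one_pos
  have huIcc : (Set.uIcc (0:ℝ) 1 : Set ℝ) = I01 := uIcc_of_le zero_le_one
  have key : ∀ m ≤ k + 1,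
      ∫ x in (0:ℝ)..1, (derivative^[k+1] H).eval x * iteratedDerivWithin (k+1) g I01 x
        = (-1 : ℝ)^m * ∫ x in (0:ℝ)..1,
            (derivative^[k+1+m] H).eval x * iteratedDerivWithin (k+1-m) g I01 x := by
    intro m hm
    induction m with
    | zero => simp
    | succ m ih =>
      have hmk : m ≤ k := Nat.lt_succ_iff.mp hm
      rw [ih (le_of_lt hm)]
      have step : (∫ x in (0:ℝ)..1,
            (derivative^[k+1+m] H).eval x * iteratedDerivWithin (k+1-m) g I01 x)
          = - ∫ x in (0:ℝ)..1,
            (derivative^[k+1+(m+1)] H).eval x * iteratedDerivWithin (k+1-(m+1)) g I01 x := by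
        have hsub : k + 1 - m = (k - m) + 1 := by omega
        have hsub2 : k + 1 - (m + 1) = k - m := by omega
        rw [hsub, hsub2]
        have hu : ∀ x ∈ Set.uIcc (0:ℝ) 1,
            HasDerivWithinAt (fun y => (derivative^[k+1+m] H).eval y)
              ((derivative^[k+1+(m+1)] H).eval x) (Set.uIcc (0:ℝ) 1) x := by
          intro x _
          have heq : k+1+(m+1) = (k+1+m)+1 := rfl
          rw [heq, Function.iterate_succ_apply' derivative]
          exact (Polynomial.hasDerivAt _ x).hasDerivWithinAt
        have hv : ∀ x ∈ Set.uIcc (0:ℝ) 1,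
            HasDerivWithinAt (iteratedDerivWithin (k - m) g I01)
              (iteratedDerivWithin (k - m + 1) g I01 x) (Set.uIcc (0:ℝ) 1) x := by
          rw [huIcc]
          intro x hx
          have hdiff : DifferentiableWithinAt ℝ (iteratedDerivWithin (k - m) g I01) I01 x := by
            apply (hg.differentiableOn_iteratedDerivWithin ?_ hs) x hx
            exact_mod_cast Nat.lt_succ_of_le (Nat.sub_le k m)
          have := hdiff.hasDerivWithinAt
          rwa [← iteratedDerivWithin_succ] at this
        have hu' : IntervalIntegrable (fun x => (derivative^[k+1+(m+1)] H).eval x)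
            MeasureTheory.volume 0 1 := (Polynomial.continuous _).intervalIntegrable _ _
        have hv' : IntervalIntegrable (iteratedDerivWithin (k - m + 1) g I01)
            MeasureTheory.volume 0 1 := by
          apply ContinuousOn.intervalIntegrable
          rw [huIcc]
          exact hg.continuousOn_iteratedDerivWithin (by exact_mod_cast by omega) hs
        have ibp := integral_mul_deriv_eq_deriv_mul_of_hasDerivWithinAt hu hv hu' hv'
        rw [ibp, hg0 (k - m) (Nat.sub_le _ _), hg1 (k - m) (Nat.sub_le _ _)]
        ring
      rw [step]
      ring
  have h2 := key (k + 1) le_rfl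
  have hz : derivative^[k+1+(k+1)] H = 0 := by
    apply Polynomial.iterate_derivative_eq_zero
    omega
  rw [hz] at h2
  simpa using h2

/-- Among all `C^{k+1}` functions `ψ` on `[0,1]` with the same Hermite endpoint data as
`φ` (derivatives of orders `0,…,k` at `0` and `1`), the Hermite interpolant `H` of `φ`
minimizes the stability functional `F[ψ] = ∫_0^1 (ψ^{(k+1)})^2`. -/
theorem hermite_interpolant_minimizes (k : ℕ) (φ : ℝ → ℝ)
    (hφ : ContDiffOn ℝ (k + 1 : ℕ) φ (Set.Icc 0 1))
    (H : Polynomial ℝ) (hdeg : H.natDegree ≤ 2 * k + 1)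
    (h0 : ∀ α ≤ k, iteratedDeriv α (fun t => H.eval t) 0 =
        iteratedDerivWithin α φ (Set.Icc 0 1) 0)
    (h1 : ∀ α ≤ k, iteratedDeriv α (fun t => H.eval t) 1 =
        iteratedDerivWithin α φ (Set.Icc 0 1) 1) :
    ∀ ψ : ℝ → ℝ, ContDiffOn ℝ (k + 1 : ℕ) ψ (Set.Icc 0 1) →
      (∀ α ≤ k, iteratedDerivWithin α ψ (Set.Icc 0 1) 0 =
          iteratedDerivWithin α φ (Set.Icc 0 1) 0) →
      (∀ α ≤ k, iteratedDerivWithin α ψ (Set.Icc 0 1) 1 =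
          iteratedDerivWithin α φ (Set.Icc 0 1) 1) →
      (∫ x in (0 : ℝ)..1, (iteratedDeriv (k + 1) (fun t => H.eval t) x) ^ 2) ≤
        ∫ x in (0 : ℝ)..1, (iteratedDerivWithin (k + 1) ψ (Set.Icc 0 1) x) ^ 2 := by
  intro ψ hψ hψ0 hψ1
  have hs : UniqueDiffOn ℝ I01 := uniqueDiffOn_Icc one_pos
  have huIcc : (Set.uIcc (0:ℝ) 1 : Set ℝ) = I01 := uIcc_of_le zero_le_one
  have h0m : (0:ℝ) ∈ I01 := ⟨le_refl 0, zero_le_one⟩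
  have h1m : (1:ℝ) ∈ I01 := ⟨zero_le_one, le_refl 1⟩
  set g : ℝ → ℝ := ψ - (fun t => H.eval t) with hgdef
  have hHc : ContDiffOn ℝ (k + 1 : ℕ) (fun t : ℝ => H.eval t) I01 :=
    (contDiff_polyEval H).contDiffOn
  have hg : ContDiffOn ℝ (k + 1 : ℕ) g I01 := hψ.sub hHc
  -- decomposition of iterated derivatives of g
  have hdecomp : ∀ n ≤ k + 1, ∀ x ∈ I01,
      iteratedDerivWithin n g I01 x
        = iteratedDerivWithin n ψ I01 x - (derivative^[n] H).eval x := by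
    intro n hn x hx
    have hψ' : ContDiffOn ℝ (n : ℕ∞) ψ I01 := hψ.of_le (by exact_mod_cast hn)
    have hH' : ContDiffOn ℝ (n : ℕ∞) (fun t : ℝ => H.eval t) I01 := hHc.of_le (by exact_mod_cast hn)
    rw [hgdef, iteratedDerivWithin_sub hx hs (hψ' x hx) (hH' x hx), polyIteratedDerivWithin]
    exact hx
  -- boundary conditions for g
  have hg0 : ∀ α ≤ k, iteratedDerivWithin α g I01 0 = 0 := by
    intro α hα
    rw [hdecomp α (Nat.le_succ_of_le hα) 0 h0m, hψ0 α hα, ← h0 α hα,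
      polyIteratedDeriv H α]
    ring
  have hg1 : ∀ α ≤ k, iteratedDerivWithin α g I01 1 = 0 := by
    intro α hα
    rw [hdecomp α (Nat.le_succ_of_le hα) 1 h1m, hψ1 α hα, ← h1 α hα,
      polyIteratedDeriv H α]
    ring
  set h : ℝ → ℝ := fun x => (derivative^[k+1] H).eval x with hhdef
  set d : ℝ → ℝ := iteratedDerivWithin (k+1) g I01 with hddef
  -- rewrite LHS
  have hLHS : (∫ x in (0:ℝ)..1, (iteratedDeriv (k + 1) (fun t => H.eval t) x) ^ 2)
      = ∫ x in (0:ℝ)..1, h x ^ 2 := by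
    rw [polyIteratedDeriv H (k+1)]
  -- rewrite RHS
  have hRHS : (∫ x in (0:ℝ)..1, (iteratedDerivWithin (k + 1) ψ I01 x) ^ 2)
      = ∫ x in (0:ℝ)..1, (h x + d x) ^ 2 := by
    apply intervalIntegral.integral_congr
    intro x hx
    rw [huIcc] at hx
    have := hdecomp (k+1) le_rfl x hx
    simp only [hddef, hhdef]
    rw [this]
    ring
  -- integrability
  have hcont_h : Continuous h := Polynomial.continuous _
  have hcont_d : ContinuousOn d I01 := hg.continuousOn_iteratedDerivWithin le_rfl hs
  have ih2 : IntervalIntegrable (fun x => h x ^ 2) MeasureTheory.volume 0 1 :=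
    (hcont_h.pow 2).intervalIntegrable _ _
  have ihd : IntervalIntegrable (fun x => h x * d x) MeasureTheory.volume 0 1 := by
    apply ContinuousOn.intervalIntegrable
    rw [huIcc]
    exact hcont_h.continuousOn.mul hcont_d
  have id2 : IntervalIntegrable (fun x => d x ^ 2) MeasureTheory.volume 0 1 := by
    apply ContinuousOn.intervalIntegrable
    rw [huIcc]
    exact hcont_d.pow 2
  have hexpand : (∫ x in (0:ℝ)..1, (h x + d x) ^ 2)
      = (∫ x in (0:ℝ)..1, h x ^ 2) + ((∫ x in (0:ℝ)..1, 2 * (h x * d x))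
          + ∫ x in (0:ℝ)..1, d x ^ 2) := by
    rw [← intervalIntegral.integral_add ((ihd.const_mul 2)) id2,
      ← intervalIntegral.integral_add ih2 ((ihd.const_mul 2).add id2)]
    apply intervalIntegral.integral_congr
    intro x _
    ring
  have hcross : (∫ x in (0:ℝ)..1, 2 * (h x * d x)) = 0 := by
    rw [intervalIntegral.integral_const_mul]
    rw [cross_zero k H hdeg g hg hg0 hg1]
    ring
  have hd2 : (0:ℝ) ≤ ∫ x in (0:ℝ)..1, d x ^ 2 :=
    intervalIntegral.integral_nonneg zero_le_one (fun x _ => sq_nonneg _)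
  rw [hLHS, hRHS, hexpand, hcross]
  linarith
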